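/- arXiv:0705.4362 — 3 statements merged into one kernel-verified Lean document; each statement's English description precedes it below -/
import Mathlib

section
/- Let m₁, m₂ be integers and let z₁ ≠ z₂ be complex numbers. Let P₁ and P₂ be the 3×3 permutation matrices of the transpositions (1 2) and (1 3) respectively, and define A(z) = m₁·P₁/(z−z₁) + m₂·P₂/(z−z₂). Suppose there is no integer s with s² = m₁² − m₁m₂ + m₂². Then there is no matrix function W : ℂ ∖ {z₁, z₂} → M₃(ℂ) all of whose entries are given by rational functions of z, with det W not identically zero, satisfying W′(z) = A(z)·W(z) for all z ∈ ℂ ∖ {z₁, z₂} at which all entries of W are defined. -/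
open Matrix

/-- The n×n complex permutation matrix of the transposition (a b). -/
noncomputable def permP (n : ℕ) (a b : Fin n) : Matrix (Fin n) (Fin n) ℂ :=
  Matrix.of fun i j => if i = Equiv.swap a b j then 1 else 0

open Polynomial

lemma coeff_X_mul_derivative (P : ℂ[X]) (j : ℕ) :
    (X * derivative P).coeff j = j * P.coeff j := by
  cases j with
  | zero => simp
  | succ k => rw [coeff_X_mul, coeff_derivative]; push_cast; ring

lemma natDegree_X_mul_derivative_le (P : ℂ[X]) :
    (X * derivative P).natDegree ≤ P.natDegree := by
  rw [natDegree_le_iff_coeff_eq_zero]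
  intro N hN
  rw [coeff_X_mul_derivative, coeff_eq_zero_of_natDegree_lt hN, mul_zero]

lemma aux_eigen {a b : ℂ} (P R Q C2 B1 B2 : ℂ[X]) (hQ : Q ≠ 0) (hPR : P ≠ 0 ∨ R ≠ 0)
    (hC2d : C2.natDegree ≤ 2) (hC2 : C2.coeff 2 = 1)
    (hB1d : B1.natDegree ≤ 2) (hB1 : B1.coeff 2 = a)
    (hB2d : B2.natDegree ≤ 2) (hB2 : B2.coeff 2 = b)
    (hE1 : C2 * ((X * derivative P) * Q - P * (X * derivative Q))
        = -(B1 * (P * Q)) - B2 * (R * Q))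
    (hE2 : C2 * ((X * derivative R) * Q - R * (X * derivative Q))
        = (B1 - B2) * (P * Q) + B1 * (R * Q)) :
    ∃ s : ℤ, (s : ℂ) ^ 2 = a ^ 2 - a * b + b ^ 2 := by
  set n := max P.natDegree R.natDegree with hn
  set m := Q.natDegree with hm
  have hPn : P.natDegree ≤ n := le_max_left _ _
  have hRn : R.natDegree ≤ n := le_max_right _ _
  have hQm : Q.natDegree ≤ m := le_rfl
  have hqm : Q.coeff m ≠ 0 := by
    rw [hm]; exact leadingCoeff_ne_zero.mpr hQ
  have hpr : P.coeff n ≠ 0 ∨ R.coeff n ≠ 0 := by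
    rcases le_total P.natDegree R.natDegree with h | h
    · have hn' : n = R.natDegree := max_eq_right h
      by_cases hR : R = 0
      · have hP : P ≠ 0 := by
          rcases hPR with h' | h'
          · exact h'
          · exact absurd hR h'
        left
        have hnp : n = P.natDegree := le_antisymm (by rw [hn', hR]; simpa using h) hPn
        rw [hnp]; exact leadingCoeff_ne_zero.mpr hP
      · right; rw [hn']; exact leadingCoeff_ne_zero.mpr hR
    · have hn' : n = P.natDegree := max_eq_left h
      by_cases hP : P = 0
      · have hR : R ≠ 0 := by
          rcases hPR with h' | h'
          · exact absurd hP h'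
          · exact h'
        right
        have hnr : n = R.natDegree := le_antisymm (by rw [hn', hP]; simpa using h) hRn
        rw [hnr]; exact leadingCoeff_ne_zero.mpr hR
      · left; rw [hn']; exact leadingCoeff_ne_zero.mpr hP
  have hXP : (X * derivative P).natDegree ≤ n := (natDegree_X_mul_derivative_le P).trans hPn
  have hXR : (X * derivative R).natDegree ≤ n := (natDegree_X_mul_derivative_le R).trans hRn
  have hXQ : (X * derivative Q).natDegree ≤ m := natDegree_X_mul_derivative_le Q
  have hS1 : ((X * derivative P) * Q - P * (X * derivative Q)).natDegree ≤ n + m :=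
    le_trans (natDegree_sub_le _ _) (max_le
      (le_trans natDegree_mul_le (add_le_add hXP hQm))
      (le_trans natDegree_mul_le (add_le_add hPn hXQ)))
  have hS2 : ((X * derivative R) * Q - R * (X * derivative Q)).natDegree ≤ n + m :=
    le_trans (natDegree_sub_le _ _) (max_le
      (le_trans natDegree_mul_le (add_le_add hXR hQm))
      (le_trans natDegree_mul_le (add_le_add hRn hXQ)))
  have hPQ : (P * Q).natDegree ≤ n + m := le_trans natDegree_mul_le (add_le_add hPn hQm)
  have hRQ : (R * Q).natDegree ≤ n + m := le_trans natDegree_mul_le (add_le_add hRn hQm)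
  have hc1 := congrArg (fun f : ℂ[X] => f.coeff (2 + (n + m))) hE1
  have hc2 := congrArg (fun f : ℂ[X] => f.coeff (2 + (n + m))) hE2
  simp only [coeff_sub, coeff_add, coeff_neg] at hc1 hc2
  rw [coeff_mul_add_eq_of_natDegree_le hC2d hS1, coeff_mul_add_eq_of_natDegree_le hB1d hPQ,
      coeff_mul_add_eq_of_natDegree_le hB2d hRQ, coeff_sub,
      coeff_mul_add_eq_of_natDegree_le hXP hQm, coeff_mul_add_eq_of_natDegree_le hPn hXQ,
      coeff_mul_add_eq_of_natDegree_le hPn hQm, coeff_mul_add_eq_of_natDegree_le hRn hQm,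
      coeff_X_mul_derivative, coeff_X_mul_derivative, hC2, hB1, hB2] at hc1
  have hB12d : (B1 - B2).natDegree ≤ 2 := le_trans (natDegree_sub_le _ _) (max_le hB1d hB2d)
  rw [coeff_mul_add_eq_of_natDegree_le hC2d hS2, coeff_mul_add_eq_of_natDegree_le hB12d hPQ,
      coeff_mul_add_eq_of_natDegree_le hB1d hRQ, coeff_sub,
      coeff_mul_add_eq_of_natDegree_le hXR hQm, coeff_mul_add_eq_of_natDegree_le hRn hXQ,
      coeff_X_mul_derivative, coeff_X_mul_derivative, coeff_sub,
      coeff_mul_add_eq_of_natDegree_le hPn hQm, coeff_mul_add_eq_of_natDegree_le hRn hQm,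
      hB1, hB2, hC2] at hc2
  set k : ℂ := (n : ℂ) - (m : ℂ) with hkdef
  have heig1 : k * P.coeff n = -(a * P.coeff n) - b * R.coeff n :=
    mul_right_cancel₀ hqm (by linear_combination hc1)
  have heig2 : k * R.coeff n = (a - b) * P.coeff n + a * R.coeff n :=
    mul_right_cancel₀ hqm (by linear_combination hc2)
  refine ⟨(n : ℤ) - (m : ℤ), ?_⟩
  have hk : (((n : ℤ) - (m : ℤ) : ℤ) : ℂ) = k := by push_cast; ring
  rw [hk]
  rcases hpr with hp | hp
  · have h0 : (k ^ 2 - (a ^ 2 - a * b + b ^ 2)) * P.coeff n = 0 := by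
      linear_combination (k - a) * heig1 - b * heig2
    have := (mul_eq_zero.mp h0).resolve_right hp
    linear_combination this
  · have h0 : (k ^ 2 - (a ^ 2 - a * b + b ^ 2)) * R.coeff n = 0 := by
      linear_combination (a - b) * heig1 + (k + a) * heig2
    have := (mul_eq_zero.mp h0).resolve_right hp
    linear_combination this

lemma row0 (a b : ℂ) (M : Matrix (Fin 3) (Fin 3) ℂ) (j : Fin 3) :
    ((a • permP 3 0 1 + b • permP 3 0 2) * M) 0 j = a * M 1 j + b * M 2 j := by
  simp [permP, Matrix.mul_apply, Matrix.add_apply, Fin.sum_univ_three, Equiv.swap_apply_def]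

lemma row1 (a b : ℂ) (M : Matrix (Fin 3) (Fin 3) ℂ) (j : Fin 3) :
    ((a • permP 3 0 1 + b • permP 3 0 2) * M) 1 j = a * M 0 j + b * M 1 j := by
  simp [permP, Matrix.mul_apply, Matrix.add_apply, Fin.sum_univ_three, Equiv.swap_apply_def]

lemma row2 (a b : ℂ) (M : Matrix (Fin 3) (Fin 3) ℂ) (j : Fin 3) :
    ((a • permP 3 0 1 + b • permP 3 0 2) * M) 2 j = b * M 0 j + a * M 2 j := by
  simp [permP, Matrix.mul_apply, Matrix.add_apply, Fin.sum_univ_three, Equiv.swap_apply_def]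

/-- If m₁² - m₁m₂ + m₂² is not the square of an integer, then the system
W' = A(z)·W with A(z) = m₁·P₁/(z-z₁) + m₂·P₂/(z-z₂) (P₁, P₂ the permutation
matrices of (1 2) and (1 3)) has no fundamental solution all of whose entries are
rational functions of z:  there are no polynomials p i j, q i j (q i j ≠ 0) such that
W(z) = (p i j (z)/q i j (z)) satisfies the equation wherever its entries are defined
and det W is not identically zero. -/
theorem no_rational_fundamental_solution (m₁ m₂ : ℤ) (z₁ z₂ : ℂ) (hz : z₁ ≠ z₂)
    (hs : ¬ ∃ s : ℤ, s ^ 2 = m₁ ^ 2 - m₁ * m₂ + m₂ ^ 2) :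
    ¬ ∃ (p q : Fin 3 → Fin 3 → Polynomial ℂ) (W : ℂ → Matrix (Fin 3) (Fin 3) ℂ),
      (∀ i j, q i j ≠ 0) ∧
      (∀ z : ℂ, W z = Matrix.of fun i j => (p i j).eval z / (q i j).eval z) ∧
      (∃ w : ℂ, w ≠ z₁ ∧ w ≠ z₂ ∧ (∀ i j, (q i j).eval w ≠ 0) ∧ (W w).det ≠ 0) ∧
      (∀ z : ℂ, z ≠ z₁ → z ≠ z₂ → (∀ i j, (q i j).eval z ≠ 0) → ∀ i j,
        HasDerivAt (fun u => W u i j)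
          (((((m₁ : ℂ) / (z - z₁)) • permP 3 0 1 + ((m₂ : ℂ) / (z - z₂)) • permP 3 0 2)
            * W z) i j) z) := by
  rintro ⟨p, q, W, hq, hW, ⟨w, hw1, hw2, hwq, hwdet⟩, hD⟩
  have hWe : ∀ z (i j : Fin 3), W z i j = (p i j).eval z / (q i j).eval z := by
    intro z i j; rw [hW z]; rfl
  obtain ⟨j₀, hcol⟩ : ∃ j, W w 0 j ≠ W w 1 j ∨ W w 1 j ≠ W w 2 j := by
    by_contra h
    push_neg at h
    exact hwdet (Matrix.det_zero_of_row_eq (show (0 : Fin 3) ≠ 1 by decide)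
      (funext fun j => (h j).1))
  -- bad set is finite
  have hbad : {z : ℂ | z = z₁ ∨ z = z₂ ∨ ∃ i j, (q i j).eval z = 0}.Finite := by
    apply Set.Finite.subset (s := insert z₁ (insert z₂
      (⋃ (i : Fin 3), ⋃ (j : Fin 3), {x : ℂ | (q i j).IsRoot x})))
    · exact Set.Finite.insert _ (Set.Finite.insert _
        (Set.finite_iUnion fun i => Set.finite_iUnion fun j =>
          Polynomial.finite_setOf_isRoot (hq i j)))
    · intro z hz'
      rcases hz' with h | h | ⟨i, j, h⟩
      · exact Set.mem_insert_iff.mpr (Or.inl h)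
      · exact Set.mem_insert_iff.mpr (Or.inr (Set.mem_insert_iff.mpr (Or.inl h)))
      · refine Set.mem_insert_iff.mpr (Or.inr (Set.mem_insert_iff.mpr (Or.inr ?_)))
        exact Set.mem_iUnion.mpr ⟨i, Set.mem_iUnion.mpr ⟨j, h⟩⟩
  -- notation
  set p0 := p 0 j₀ with hp0d
  set p1 := p 1 j₀ with hp1d
  set p2 := p 2 j₀ with hp2d
  set q0 := q 0 j₀ with hq0d
  set q1 := q 1 j₀ with hq1d
  set q2 := q 2 j₀ with hq2d
  -- the three scalar differential identities, as polynomial identities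
  have hFgen : ∀ (F G : ℂ[X]),
      (∀ z : ℂ, z ≠ z₁ → z ≠ z₂ → (∀ i j, (q i j).eval z ≠ 0) → F.eval z = G.eval z) →
      F = G := by
    intro F G h
    rw [← sub_eq_zero]
    apply eq_zero_of_infinite_isRoot
    apply Set.Infinite.mono _ hbad.infinite_compl
    intro z hz'
    simp only [Set.mem_compl_iff, Set.mem_setOf_eq, not_or, not_exists] at hz'
    obtain ⟨h1, h2, h3⟩ := hz'
    have := h z h1 h2 fun i j => h3 i j
    simp [IsRoot, this]
  have hF0 : ((X - C z₁) * (X - C z₂)) * (derivative p0 * q0 - p0 * derivative q0) * (q1 * q2)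
      = (C (m₁ : ℂ) * (X - C z₂)) * p1 * (q0 ^ 2 * q2)
        + (C (m₂ : ℂ) * (X - C z₁)) * p2 * (q0 ^ 2 * q1) := by
    apply hFgen
    intro z hz1 hz2 hqz
    have hd := hD z hz1 hz2 hqz 0 j₀
    rw [row0] at hd
    have hd' : HasDerivAt (fun u => W u 0 j₀)
        (((derivative p0).eval z * q0.eval z - p0.eval z * (derivative q0).eval z)
          / q0.eval z ^ 2) z := by
      have hfun : (fun u => W u 0 j₀) = fun u => p0.eval u / q0.eval u :=
        funext fun u => hWe u 0 j₀
      rw [hfun]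
      exact (p0.hasDerivAt z).div (q0.hasDerivAt z) (hqz 0 j₀)
    have key := hd'.unique hd
    rw [hWe z 1 j₀, hWe z 2 j₀] at key
    rw [← hp1d, ← hq1d, ← hp2d, ← hq2d] at key
    have h1 : z - z₁ ≠ 0 := sub_ne_zero.mpr hz1
    have h2 : z - z₂ ≠ 0 := sub_ne_zero.mpr hz2
    have e0 : q0.eval z ≠ 0 := hqz 0 j₀
    have e1 : q1.eval z ≠ 0 := hqz 1 j₀
    have e2 : q2.eval z ≠ 0 := hqz 2 j₀
    simp only [eval_mul, eval_add, eval_sub, eval_pow, eval_X, eval_C]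
    field_simp at key
    linear_combination key
  have hF1 : ((X - C z₁) * (X - C z₂)) * (derivative p1 * q1 - p1 * derivative q1) * (q0 * q2)
      = (C (m₁ : ℂ) * (X - C z₂)) * p0 * (q1 ^ 2 * q2)
        + (C (m₂ : ℂ) * (X - C z₁)) * p1 * (q1 * q0 * q2) := by
    apply hFgen
    intro z hz1 hz2 hqz
    have hd := hD z hz1 hz2 hqz 1 j₀
    rw [row1] at hd
    have hd' : HasDerivAt (fun u => W u 1 j₀)
        (((derivative p1).eval z * q1.eval z - p1.eval z * (derivative q1).eval z)
          / q1.eval z ^ 2) z := by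
      have hfun : (fun u => W u 1 j₀) = fun u => p1.eval u / q1.eval u :=
        funext fun u => hWe u 1 j₀
      rw [hfun]
      exact (p1.hasDerivAt z).div (q1.hasDerivAt z) (hqz 1 j₀)
    have key := hd'.unique hd
    rw [hWe z 0 j₀, hWe z 1 j₀] at key
    rw [← hp0d, ← hq0d, ← hp1d, ← hq1d] at key
    have h1 : z - z₁ ≠ 0 := sub_ne_zero.mpr hz1
    have h2 : z - z₂ ≠ 0 := sub_ne_zero.mpr hz2
    have e0 : q0.eval z ≠ 0 := hqz 0 j₀
    have e1 : q1.eval z ≠ 0 := hqz 1 j₀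
    have e2 : q2.eval z ≠ 0 := hqz 2 j₀
    simp only [eval_mul, eval_add, eval_sub, eval_pow, eval_X, eval_C]
    field_simp at key
    apply mul_left_cancel₀ e1
    linear_combination eval z q1 * eval z q2 * key
  have hF2 : ((X - C z₁) * (X - C z₂)) * (derivative p2 * q2 - p2 * derivative q2) * (q0 * q1)
      = (C (m₂ : ℂ) * (X - C z₁)) * p0 * (q2 ^ 2 * q1)
        + (C (m₁ : ℂ) * (X - C z₂)) * p2 * (q2 * q0 * q1) := by
    apply hFgen
    intro z hz1 hz2 hqz
    have hd := hD z hz1 hz2 hqz 2 j₀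
    rw [row2] at hd
    have hd' : HasDerivAt (fun u => W u 2 j₀)
        (((derivative p2).eval z * q2.eval z - p2.eval z * (derivative q2).eval z)
          / q2.eval z ^ 2) z := by
      have hfun : (fun u => W u 2 j₀) = fun u => p2.eval u / q2.eval u :=
        funext fun u => hWe u 2 j₀
      rw [hfun]
      exact (p2.hasDerivAt z).div (q2.hasDerivAt z) (hqz 2 j₀)
    have key := hd'.unique hd
    rw [hWe z 0 j₀, hWe z 2 j₀] at key
    rw [← hp0d, ← hq0d, ← hp2d, ← hq2d] at key
    have h1 : z - z₁ ≠ 0 := sub_ne_zero.mpr hz1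
    have h2 : z - z₂ ≠ 0 := sub_ne_zero.mpr hz2
    have e0 : q0.eval z ≠ 0 := hqz 0 j₀
    have e1 : q1.eval z ≠ 0 := hqz 1 j₀
    have e2 : q2.eval z ≠ 0 := hqz 2 j₀
    simp only [eval_mul, eval_add, eval_sub, eval_pow, eval_X, eval_C]
    field_simp at key
    apply mul_left_cancel₀ e2
    linear_combination eval z q2 * eval z q1 * key
  -- combined 2-dimensional system
  set QQ : ℂ[X] := q0 * q1 * q2 with hQQd
  set PP : ℂ[X] := p0 * q1 * q2 - p1 * q0 * q2 with hPPd
  set RR : ℂ[X] := p1 * q0 * q2 - p2 * q0 * q1 with hRRd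
  have hQQ : QQ ≠ 0 := mul_ne_zero (mul_ne_zero (hq 0 j₀) (hq 1 j₀)) (hq 2 j₀)
  have hPR : PP ≠ 0 ∨ RR ≠ 0 := by
    rcases hcol with h | h
    · left
      intro h0
      apply h
      have hev : PP.eval w = 0 := by rw [h0]; simp
      rw [hPPd] at hev
      simp only [eval_sub, eval_mul] at hev
      rw [hWe w 0 j₀, hWe w 1 j₀, div_eq_div_iff (hwq 0 j₀) (hwq 1 j₀)]
      have e2 : q2.eval w ≠ 0 := hwq 2 j₀
      have : (p0.eval w * q1.eval w - p1.eval w * q0.eval w) * q2.eval w = 0 := by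
        linear_combination hev
      rcases mul_eq_zero.mp this with h' | h'
      · linear_combination h'
      · exact absurd h' e2
    · right
      intro h0
      apply h
      have hev : RR.eval w = 0 := by rw [h0]; simp
      rw [hRRd] at hev
      simp only [eval_sub, eval_mul] at hev
      rw [hWe w 1 j₀, hWe w 2 j₀, div_eq_div_iff (hwq 1 j₀) (hwq 2 j₀)]
      have e0 : q0.eval w ≠ 0 := hwq 0 j₀
      have : (p1.eval w * q2.eval w - p2.eval w * q1.eval w) * q0.eval w = 0 := by
        linear_combination hev
      rcases mul_eq_zero.mp this with h' | h'
      · linear_combination h'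
      · exact absurd h' e0
  have hE1 : ((X - C z₁) * (X - C z₂)) * ((X * derivative PP) * QQ - PP * (X * derivative QQ))
      = -((X * (C (m₁ : ℂ) * (X - C z₂))) * (PP * QQ))
        - (X * (C (m₂ : ℂ) * (X - C z₁))) * (RR * QQ) := by
    rw [hPPd, hRRd, hQQd]
    simp only [derivative_sub, derivative_mul]
    linear_combination (X * q1 * q2) * hF0 - (X * q0 * q2) * hF1
  have hE2 : ((X - C z₁) * (X - C z₂)) * ((X * derivative RR) * QQ - RR * (X * derivative QQ))
      = ((X * (C (m₁ : ℂ) * (X - C z₂))) - (X * (C (m₂ : ℂ) * (X - C z₁)))) * (PP * QQ)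
        + (X * (C (m₁ : ℂ) * (X - C z₂))) * (RR * QQ) := by
    rw [hPPd, hRRd, hQQd]
    simp only [derivative_sub, derivative_mul]
    linear_combination (X * q0 * q2) * hF1 - (X * q0 * q1) * hF2
  have hC2d : (((X : ℂ[X]) - C z₁) * (X - C z₂)).natDegree ≤ 2 :=
    le_trans natDegree_mul_le (by simp [natDegree_X_sub_C])
  have hC2 : (((X : ℂ[X]) - C z₁) * (X - C z₂)).coeff 2 = 1 := by
    have : ((X : ℂ[X]) - C z₁) * (X - C z₂) = X ^ 2 - C (z₁ + z₂) * X + C (z₁ * z₂) := by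
      simp only [C_add, C_mul]; ring
    rw [this]
    simp [coeff_X]
  have hB1d : ((X : ℂ[X]) * (C (m₁ : ℂ) * (X - C z₂))).natDegree ≤ 2 := by
    have h' : ((C (m₁ : ℂ)) * (X - C z₂)).natDegree ≤ 1 :=
      le_trans natDegree_mul_le (by simp [natDegree_X_sub_C])
    refine le_trans natDegree_mul_le ?_
    rw [natDegree_X]
    omega
  have hB1 : ((X : ℂ[X]) * (C (m₁ : ℂ) * (X - C z₂))).coeff 2 = (m₁ : ℂ) := by
    rw [coeff_X_mul, coeff_C_mul, coeff_sub, coeff_X_one, coeff_C]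
    norm_num
  have hB2d : ((X : ℂ[X]) * (C (m₂ : ℂ) * (X - C z₁))).natDegree ≤ 2 := by
    have h' : ((C (m₂ : ℂ)) * (X - C z₁)).natDegree ≤ 1 :=
      le_trans natDegree_mul_le (by simp [natDegree_X_sub_C])
    refine le_trans natDegree_mul_le ?_
    rw [natDegree_X]
    omega
  have hB2 : ((X : ℂ[X]) * (C (m₂ : ℂ) * (X - C z₁))).coeff 2 = (m₂ : ℂ) := by
    rw [coeff_X_mul, coeff_C_mul, coeff_sub, coeff_X_one, coeff_C]
    norm_num
  obtain ⟨s, hs'⟩ := aux_eigen PP RR QQ _ _ _ hQQ hPR hC2d hC2 hB1d hB1 hB2d hB2 hE1 hE2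
  apply hs
  refine ⟨s, ?_⟩
  have : ((s ^ 2 : ℤ) : ℂ) = ((m₁ ^ 2 - m₁ * m₂ + m₂ ^ 2 : ℤ) : ℂ) := by push_cast; linear_combination hs'
  exact_mod_cast this
end

section
/- Let m₂ be an integer with m₂ ≠ 0 and m₂ ≠ 1, and let z₁ ≠ z₂ be complex numbers. Let P₁ and P₂ be the 3×3 permutation matrices of the transpositions (1 2) and (1 3) respectively, and define A(z) = P₁/(z−z₁) + m₂·P₂/(z−z₂). Then there is no matrix function W : ℂ ∖ {z₁, z₂} → M₃(ℂ) all of whose entries are given by rational functions of z, with det W not identically zero, satisfying W′(z) = A(z)·W(z) for all z ∈ ℂ ∖ {z₁, z₂} at which all entries of W are defined. -/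
open Matrix

section Aux
open Polynomial

private lemma int_no_sq (m n : ℤ) (hm0 : m ≠ 0) (hm1 : m ≠ 1) : n^2 ≠ m^2 - m + 1 := by
  intro h
  have h4 : (2*n)^2 = (2*m-1)^2 + 3 := by linear_combination 4*h
  set A : ℤ := |2*n| with hA
  set B : ℤ := |2*m-1| with hB
  have hA0 : 0 ≤ A := abs_nonneg _
  have hB0 : 0 ≤ B := abs_nonneg _
  have hX2 : A^2 = B^2 + 3 := by rw [hA, hB, sq_abs, sq_abs]; exact h4
  have hBge : 3 ≤ B := by
    rcases abs_cases (2*m-1) with ⟨h1, _⟩ | ⟨h1, _⟩ <;> omega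
  have h5 : B < A := by
    by_contra hc
    push_neg at hc
    have := pow_le_pow_left₀ hA0 hc 2
    omega
  have h6 : A < B + 1 := by
    by_contra hc
    push_neg at hc
    have := pow_le_pow_left₀ (by omega : (0:ℤ) ≤ B + 1) hc 2
    nlinarith
  omega

private lemma coeff_X_mul_deriv (P : Polynomial ℂ) (M : ℕ) :
    (X * derivative P).coeff M = (M : ℂ) * P.coeff M := by
  cases M with
  | zero => simp [Polynomial.mul_coeff_zero]
  | succ n =>
      rw [Polynomial.coeff_X_mul, Polynomial.coeff_derivative]
      push_cast; ring

private lemma natDegree_X_mul_deriv_le (P : Polynomial ℂ) (M : ℕ) (h : P.natDegree ≤ M) :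
    (X * derivative P).natDegree ≤ M := by
  rcases Nat.eq_zero_or_pos M with hM | hM
  · subst hM
    have : P.natDegree = 0 := Nat.le_zero.mp h
    obtain ⟨c, rfl⟩ := Polynomial.natDegree_eq_zero.mp this
    simp
  · calc (X * derivative P).natDegree ≤ X.natDegree + (derivative P).natDegree :=
        Polynomial.natDegree_mul_le
      _ ≤ 1 + (P.natDegree - 1) := by
        gcongr
        · exact Polynomial.natDegree_X_le
        · exact Polynomial.natDegree_derivative_le P
      _ ≤ M := by omega

private lemma coeff_extract (z₁ z₂ : ℂ) (N Q R : Polynomial ℂ) (M r : ℕ)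
    (hN : N.natDegree ≤ M) (hQ : Q.natDegree ≤ r) (hR : R.natDegree ≤ M + 1)
    (E : (X - C z₁) * (X - C z₂) * (derivative N * Q - N * derivative Q) = R * Q) :
    ((M : ℂ) - (r : ℂ)) * (N.coeff M * Q.coeff r) = R.coeff (M+1) * Q.coeff r := by
  have E' : ((X - C z₁) * (X - C z₂) * (X * derivative N)) * Q
      - ((X - C z₁) * (X - C z₂) * N) * (X * derivative Q) = (X * R) * Q := by
    calc ((X - C z₁) * (X - C z₂) * (X * derivative N)) * Q
        - ((X - C z₁) * (X - C z₂) * N) * (X * derivative Q)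
        = X * ((X - C z₁) * (X - C z₂) * (derivative N * Q - N * derivative Q)) := by ring
      _ = X * (R * Q) := by rw [E]
      _ = (X * R) * Q := by ring
  have hq2 : ((X - C z₁) * (X - C z₂) : Polynomial ℂ).natDegree ≤ 2 := by
    compute_degree
  have hc2 : ((X - C z₁) * (X - C z₂) : Polynomial ℂ).coeff 2 = 1 := by
    have : ((X - C z₁) * (X - C z₂) : Polynomial ℂ).coeff (1 + 1)
        = (X - C z₁).coeff 1 * (X - C z₂).coeff 1 :=
      coeff_mul_add_eq_of_natDegree_le (by compute_degree) (by compute_degree)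
    simpa using this
  have hL1 : (((X - C z₁) * (X - C z₂) * (X * derivative N)) * Q).coeff ((2 + M) + r)
      = ((M : ℂ) * N.coeff M) * Q.coeff r := by
    rw [coeff_mul_add_eq_of_natDegree_le (Polynomial.natDegree_mul_le.trans
        (by have := natDegree_X_mul_deriv_le N M hN; omega)) hQ]
    rw [coeff_mul_add_eq_of_natDegree_le hq2 (natDegree_X_mul_deriv_le N M hN)]
    rw [hc2, coeff_X_mul_deriv]
    ring
  have hL2 : ((((X - C z₁) * (X - C z₂)) * N) * (X * derivative Q)).coeff ((2 + M) + r)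
      = N.coeff M * ((r : ℂ) * Q.coeff r) := by
    rw [coeff_mul_add_eq_of_natDegree_le (Polynomial.natDegree_mul_le.trans (by omega))
        (natDegree_X_mul_deriv_le Q r hQ)]
    rw [coeff_mul_add_eq_of_natDegree_le hq2 hN, hc2, coeff_X_mul_deriv]
    ring
  have hR' : ((X * R) * Q).coeff ((2 + M) + r) = R.coeff (M + 1) * Q.coeff r := by
    have hxr : (X * R).natDegree ≤ 2 + M := by
      calc (X*R).natDegree ≤ X.natDegree + R.natDegree := Polynomial.natDegree_mul_le
        _ ≤ 2 + M := by
          have : (X : Polynomial ℂ).natDegree ≤ 1 := Polynomial.natDegree_X_le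
          omega
    rw [coeff_mul_add_eq_of_natDegree_le hxr hQ]
    have h2 : 2 + M = (M + 1) + 1 := by omega
    rw [h2, Polynomial.coeff_X_mul]
  have := congrArg (fun P : Polynomial ℂ => P.coeff ((2 + M) + r)) E'
  simp only [Polynomial.coeff_sub] at this
  rw [hL1, hL2, hR'] at this
  linear_combination this

private lemma core (m : ℤ) (hm0 : m ≠ 0) (hm1 : m ≠ 1) (z₁ z₂ : ℂ) (N₁ N₂ Q : Polynomial ℂ)
    (hQ : Q ≠ 0)
    (hE1 : (X - C z₁) * (X - C z₂) * (derivative N₁ * Q - N₁ * derivative Q)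
      = (-((X - C z₂) * N₁) + C (m:ℂ) * ((X - C z₁) * N₂)) * Q)
    (hE2 : (X - C z₁) * (X - C z₂) * (derivative N₂ * Q - N₂ * derivative Q)
      = ((C (m:ℂ) * (X - C z₁) - (X - C z₂)) * N₁ + (X - C z₂) * N₂) * Q) :
    N₁ = 0 ∧ N₂ = 0 := by
  by_contra hcon
  set M := max N₁.natDegree N₂.natDegree with hM
  set r := Q.natDegree with hr
  set a := N₁.coeff M with ha'
  set b := N₂.coeff M with hb'
  set c := Q.coeff r with hc'
  have hc : c ≠ 0 := by
    rw [hc', hr, ← Polynomial.leadingCoeff]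
    exact Polynomial.leadingCoeff_ne_zero.mpr hQ
  have hN1M : N₁.natDegree ≤ M := le_max_left _ _
  have hN2M : N₂.natDegree ≤ M := le_max_right _ _
  have hab : ¬ (a = 0 ∧ b = 0) := by
    rintro ⟨haz, hbz⟩
    have h1 : N₁ = 0 := by
      by_contra hN1
      have hne : N₁.natDegree ≠ M := by
        intro he
        rw [ha', ← he, ← Polynomial.leadingCoeff] at haz
        exact Polynomial.leadingCoeff_ne_zero.mpr hN1 haz
      have hMN2 : M = N₂.natDegree := by
        rcases max_choice N₁.natDegree N₂.natDegree with h | h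
        · exact absurd (hM.trans h).symm hne
        · exact hM.trans h
      have hN2 : N₂ = 0 := by
        by_contra hN2
        rw [hb', hMN2, ← Polynomial.leadingCoeff] at hbz
        exact Polynomial.leadingCoeff_ne_zero.mpr hN2 hbz
      rw [hN2, Polynomial.natDegree_zero] at hMN2
      have := lt_of_le_of_ne hN1M hne
      omega
    have h2 : N₂ = 0 := by
      by_contra hN2
      have hne : N₂.natDegree ≠ M := by
        intro he
        rw [hb', ← he, ← Polynomial.leadingCoeff] at hbz
        exact Polynomial.leadingCoeff_ne_zero.mpr hN2 hbz
      have hMN1 : M = N₁.natDegree := by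
        rcases max_choice N₁.natDegree N₂.natDegree with h | h
        · exact hM.trans h
        · exact absurd (hM.trans h).symm hne
      have hN1 : N₁ = 0 := by
        by_contra hN1
        rw [ha', hMN1, ← Polynomial.leadingCoeff] at haz
        exact Polynomial.leadingCoeff_ne_zero.mpr hN1 haz
      rw [hN1, Polynomial.natDegree_zero] at hMN1
      have := lt_of_le_of_ne hN2M hne
      omega
    exact hcon ⟨h1, h2⟩
  have hdX1 : ((X - C z₁ : Polynomial ℂ)).natDegree ≤ 1 := by compute_degree
  have hdX2 : ((X - C z₂ : Polynomial ℂ)).natDegree ≤ 1 := by compute_degree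
  have hcX1 : ((X - C z₁ : Polynomial ℂ)).coeff 1 = 1 := by
    simp [Polynomial.coeff_sub]
  have hcX2 : ((X - C z₂ : Polynomial ℂ)).coeff 1 = 1 := by
    simp [Polynomial.coeff_sub]
  have hR1deg : (-((X - C z₂) * N₁) + C (m:ℂ) * ((X - C z₁) * N₂)).natDegree ≤ M + 1 := by
    apply (Polynomial.natDegree_add_le _ _).trans
    apply max_le
    · rw [Polynomial.natDegree_neg]
      exact Polynomial.natDegree_mul_le.trans (by omega)
    · apply (Polynomial.natDegree_mul_le).trans
      have : ((X - C z₁) * N₂).natDegree ≤ M + 1 := Polynomial.natDegree_mul_le.trans (by omega)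
      simp only [Polynomial.natDegree_C]
      omega
  have hR1coeff : (-((X - C z₂) * N₁) + C (m:ℂ) * ((X - C z₁) * N₂)).coeff (M+1)
      = -a + (m:ℂ) * b := by
    rw [Polynomial.coeff_add, Polynomial.coeff_neg, Polynomial.coeff_C_mul]
    have e1 : ((X - C z₂) * N₁).coeff (1 + M) = (X - C z₂).coeff 1 * N₁.coeff M :=
      coeff_mul_add_eq_of_natDegree_le hdX2 hN1M
    have e2 : ((X - C z₁) * N₂).coeff (1 + M) = (X - C z₁).coeff 1 * N₂.coeff M :=
      coeff_mul_add_eq_of_natDegree_le hdX1 hN2M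
    rw [Nat.add_comm M 1, e1, e2, hcX1, hcX2]
    ring
  have hR2deg : ((C (m:ℂ) * (X - C z₁) - (X - C z₂)) * N₁ + (X - C z₂) * N₂).natDegree
      ≤ M + 1 := by
    apply (Polynomial.natDegree_add_le _ _).trans
    apply max_le
    · apply Polynomial.natDegree_mul_le.trans
      have h1 : (C (m:ℂ) * (X - C z₁) - (X - C z₂)).natDegree ≤ 1 := by
        apply (Polynomial.natDegree_sub_le _ _).trans
        apply max_le _ hdX2
        apply Polynomial.natDegree_mul_le.trans
        simp only [Polynomial.natDegree_C]
        omega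
      omega
    · exact Polynomial.natDegree_mul_le.trans (by omega)
  have hR2coeff : ((C (m:ℂ) * (X - C z₁) - (X - C z₂)) * N₁ + (X - C z₂) * N₂).coeff (M+1)
      = ((m:ℂ) - 1) * a + b := by
    have hf : (C (m:ℂ) * (X - C z₁) - (X - C z₂)).natDegree ≤ 1 := by
      apply (Polynomial.natDegree_sub_le _ _).trans
      apply max_le _ hdX2
      apply Polynomial.natDegree_mul_le.trans
      simp only [Polynomial.natDegree_C]
      omega
    have hfc : (C (m:ℂ) * (X - C z₁) - (X - C z₂)).coeff 1 = (m:ℂ) - 1 := by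
      rw [Polynomial.coeff_sub, Polynomial.coeff_C_mul, hcX1, hcX2]
      ring
    rw [Polynomial.coeff_add]
    have e1 : ((C (m:ℂ) * (X - C z₁) - (X - C z₂)) * N₁).coeff (1 + M)
        = (C (m:ℂ) * (X - C z₁) - (X - C z₂)).coeff 1 * N₁.coeff M :=
      coeff_mul_add_eq_of_natDegree_le hf hN1M
    have e2 : ((X - C z₂) * N₂).coeff (1 + M) = (X - C z₂).coeff 1 * N₂.coeff M :=
      coeff_mul_add_eq_of_natDegree_le hdX2 hN2M
    rw [Nat.add_comm M 1, e1, e2, hcX2, hfc]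
    rw [ha', hb']
    ring
  have k1 := coeff_extract z₁ z₂ N₁ Q _ M r hN1M le_rfl hR1deg hE1
  have k2 := coeff_extract z₁ z₂ N₂ Q _ M r hN2M le_rfl hR2deg hE2
  rw [hR1coeff] at k1
  rw [hR2coeff] at k2
  set ν : ℂ := (M : ℂ) - (r : ℂ) with hν
  have eq1 : ν * a = -a + (m:ℂ) * b := by
    apply mul_right_cancel₀ hc
    linear_combination k1
  have eq2 : ν * b = ((m:ℂ) - 1) * a + b := by
    apply mul_right_cancel₀ hc
    linear_combination k2
  rcases eq_or_ne a 0 with haz | haz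
  · have hbz : b ≠ 0 := fun hb => hab ⟨haz, hb⟩
    rw [haz] at eq1
    have : (m:ℂ) * b = 0 := by linear_combination -eq1
    rcases mul_eq_zero.mp this with hm | hb
    · exact hm0 (by exact_mod_cast hm)
    · exact hbz hb
  · rcases eq_or_ne b 0 with hbz | hbz
    · rw [hbz] at eq2
      have : ((m:ℂ) - 1) * a = 0 := by linear_combination -eq2
      rcases mul_eq_zero.mp this with hm | hA
      · have : (m:ℂ) = 1 := by linear_combination hm
        exact hm1 (by exact_mod_cast this)
      · exact haz hA
    · have hprod : (ν^2 - 1) * (a*b) = ((m:ℂ)^2 - (m:ℂ)) * (a*b) := by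
        linear_combination ((ν - 1)*b) * eq1 + ((m:ℂ)*b) * eq2
      have hnm : ν^2 - 1 = (m:ℂ)^2 - (m:ℂ) := mul_right_cancel₀ (mul_ne_zero haz hbz) hprod
      have hint : (((M:ℤ) - (r:ℤ)) : ℂ)^2 = (((m^2 - m + 1 : ℤ)) : ℂ) := by
        push_cast
        linear_combination hnm
      exact int_no_sq m ((M:ℤ) - (r:ℤ)) hm0 hm1 (by exact_mod_cast hint)

private lemma clearA (zz1 zz2 m DP U DQ V Ua Va Ub Vb : ℂ)
    (h1 : zz1 ≠ 0) (h2 : zz2 ≠ 0) (hV : V ≠ 0) (hVa : Va ≠ 0) (hVb : Vb ≠ 0)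
    (h : (DP * V - U * DQ)/V^2 = 1/zz1 * (Ua/Va) + m/zz2 * (Ub/Vb)) :
    (DP*V - U*DQ)*(zz1*zz2*Va*Vb) = (zz2*Ua*Vb + m*zz1*Ub*Va)*V^2 := by
  field_simp at h
  linear_combination h

private lemma clearB (zz1 zz2 m DP U DQ V Ua Va : ℂ)
    (h1 : zz1 ≠ 0) (h2 : zz2 ≠ 0) (hV : V ≠ 0) (hVa : Va ≠ 0)
    (h : (DP * V - U * DQ)/V^2 = 1/zz1 * (Ua/Va) + m/zz2 * (U/V)) :
    (DP*V - U*DQ)*(zz1*zz2*Va) = zz2*Ua*V^2 + m*zz1*U*Va*V := by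
  field_simp at h
  apply mul_right_cancel₀ hV
  linear_combination V * h

private lemma clearC (zz1 zz2 m DP U DQ V Ub Vb : ℂ)
    (h1 : zz1 ≠ 0) (h2 : zz2 ≠ 0) (hV : V ≠ 0) (hVb : Vb ≠ 0)
    (h : (DP * V - U * DQ)/V^2 = 1/zz1 * (U/V) + m/zz2 * (Ub/Vb)) :
    (DP*V - U*DQ)*(zz1*zz2*Vb) = zz2*U*Vb*V + m*zz1*Ub*V^2 := by
  field_simp at h
  apply mul_right_cancel₀ hV
  linear_combination V * h

private lemma rowA (c₁ c₂ : ℂ) (W : Matrix (Fin 3) (Fin 3) ℂ) (j : Fin 3) :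
    ((c₁ • permP 3 0 1 + c₂ • permP 3 0 2) * W) 0 j = c₁ * W 1 j + c₂ * W 2 j := by
  simp [permP, Matrix.mul_apply, Fin.sum_univ_three, Matrix.add_apply, Matrix.smul_apply,
    Equiv.swap_apply_def]

private lemma rowB (c₁ c₂ : ℂ) (W : Matrix (Fin 3) (Fin 3) ℂ) (j : Fin 3) :
    ((c₁ • permP 3 0 1 + c₂ • permP 3 0 2) * W) 1 j = c₁ * W 0 j + c₂ * W 1 j := by
  simp [permP, Matrix.mul_apply, Fin.sum_univ_three, Matrix.add_apply, Matrix.smul_apply,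
    Equiv.swap_apply_def]

private lemma rowC (c₁ c₂ : ℂ) (W : Matrix (Fin 3) (Fin 3) ℂ) (j : Fin 3) :
    ((c₁ • permP 3 0 1 + c₂ • permP 3 0 2) * W) 2 j = c₂ * W 0 j + c₁ * W 2 j := by
  simp [permP, Matrix.mul_apply, Fin.sum_univ_three, Matrix.add_apply, Matrix.smul_apply,
    Equiv.swap_apply_def]

end Aux

/-- For m₂ ∈ ℤ, m₂ ≠ 0, 1, the system W' = A(z)·W with
A(z) = P₁/(z-z₁) + m₂·P₂/(z-z₂) (P₁, P₂ the permutation matrices of (1 2) and (1 3))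
has no fundamental solution all of whose entries are rational functions of z. -/
theorem no_rational_fundamental_solution_m1_one (m₂ : ℤ) (hm0 : m₂ ≠ 0) (hm1 : m₂ ≠ 1)
    (z₁ z₂ : ℂ) (hz : z₁ ≠ z₂) :
    ¬ ∃ (p q : Fin 3 → Fin 3 → Polynomial ℂ) (W : ℂ → Matrix (Fin 3) (Fin 3) ℂ),
      (∀ i j, q i j ≠ 0) ∧
      (∀ z : ℂ, W z = Matrix.of fun i j => (p i j).eval z / (q i j).eval z) ∧
      (∃ w : ℂ, w ≠ z₁ ∧ w ≠ z₂ ∧ (∀ i j, (q i j).eval w ≠ 0) ∧ (W w).det ≠ 0) ∧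
      (∀ z : ℂ, z ≠ z₁ → z ≠ z₂ → (∀ i j, (q i j).eval z ≠ 0) → ∀ i j,
        HasDerivAt (fun u => W u i j)
          ((((1 / (z - z₁)) • permP 3 0 1 + ((m₂ : ℂ) / (z - z₂)) • permP 3 0 2)
            * W z) i j) z) := by
  classical
  rintro ⟨p, q, W, hq, hW, ⟨w, hw1, hw2, hwq, hdet⟩, hode⟩
  open Polynomial in
  -- the finite bad set
  have hBadFin : ({z₁} ∪ ({z₂} ∪ ⋃ (i : Fin 3) (k : Fin 3),
      {z : ℂ | (q i k).eval z = 0}) : Set ℂ).Finite := by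
    apply Set.Finite.union (Set.finite_singleton _)
    apply Set.Finite.union (Set.finite_singleton _)
    apply Set.finite_iUnion
    intro i
    apply Set.finite_iUnion
    intro k
    exact Polynomial.finite_setOf_isRoot (hq i k)
  have hInf : (({z₁} ∪ ({z₂} ∪ ⋃ (i : Fin 3) (k : Fin 3),
      {z : ℂ | (q i k).eval z = 0}) : Set ℂ)ᶜ).Infinite :=
    hBadFin.infinite_compl
  -- for each column j, the difference of rows 0 and 1 vanishes identically
  have colzero : ∀ j : Fin 3, p 0 j * q 1 j - p 1 j * q 0 j = 0 := by
    intro j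
    set N1 : Polynomial ℂ :=
      (p 0 j * q 1 j - p 1 j * q 0 j) * (q 2 j * ((X - C z₁) * (X - C z₂))) with hN1
    set N2 : Polynomial ℂ :=
      (p 2 j * q 1 j - p 1 j * q 2 j) * (q 0 j * ((X - C z₁) * (X - C z₂))) with hN2
    set Q : Polynomial ℂ :=
      (X - C z₁) * (X - C z₂) * (q 0 j * (q 1 j * q 2 j)) with hQdef
    have hQne : Q ≠ 0 := by
      rw [hQdef]
      apply mul_ne_zero
      · exact mul_ne_zero (Polynomial.X_sub_C_ne_zero z₁) (Polynomial.X_sub_C_ne_zero z₂)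
      · exact mul_ne_zero (hq 0 j) (mul_ne_zero (hq 1 j) (hq 2 j))
    -- entry-wise derivative identities
    have entry : ∀ z : ℂ, z ∉ ({z₁} ∪ ({z₂} ∪ ⋃ (i : Fin 3) (k : Fin 3),
          {z : ℂ | (q i k).eval z = 0}) : Set ℂ) → ∀ i : Fin 3,
        ((Polynomial.derivative (p i j)).eval z * (q i j).eval z
          - (p i j).eval z * (Polynomial.derivative (q i j)).eval z) / ((q i j).eval z)^2
        = (((1 / (z - z₁)) • permP 3 0 1 + ((m₂ : ℂ) / (z - z₂)) • permP 3 0 2) * W z) i j := by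
      intro z hzB i
      simp only [Set.mem_union, Set.mem_singleton_iff, Set.mem_iUnion, Set.mem_setOf_eq,
        not_or, not_exists] at hzB
      obtain ⟨hz1, hz2, hroots⟩ := hzB
      have hqz : ∀ i' k, (q i' k).eval z ≠ 0 := fun i' k => hroots i' k
      have h0 := hode z hz1 hz2 hqz i j
      have hf : (fun u => W u i j) = fun u => (p i j).eval u / (q i j).eval u := by
        funext u
        rw [hW u]
        rfl
      rw [hf] at h0
      have hr : HasDerivAt (fun u => (p i j).eval u / (q i j).eval u)
          (((Polynomial.derivative (p i j)).eval z * (q i j).eval z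
            - (p i j).eval z * (Polynomial.derivative (q i j)).eval z) / ((q i j).eval z)^2) z :=
        HasDerivAt.div ((p i j).hasDerivAt z) ((q i j).hasDerivAt z) (hqz i j)
      exact hr.unique h0
    -- cleared entry identities and the two polynomial ODE identities
    have both : ∀ z : ℂ, z ∈ (({z₁} ∪ ({z₂} ∪ ⋃ (i : Fin 3) (k : Fin 3),
          {z : ℂ | (q i k).eval z = 0}) : Set ℂ))ᶜ →
        (((X - C z₁) * (X - C z₂) * (Polynomial.derivative N1 * Q - N1 * Polynomial.derivative Q)).eval z
          = ((-((X - C z₂) * N1) + C (m₂:ℂ) * ((X - C z₁) * N2)) * Q).eval z)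
        ∧ (((X - C z₁) * (X - C z₂) * (Polynomial.derivative N2 * Q - N2 * Polynomial.derivative Q)).eval z
          = (((C (m₂:ℂ) * (X - C z₁) - (X - C z₂)) * N1 + (X - C z₂) * N2) * Q).eval z) := by
      intro z hzc
      have hzB := hzc
      rw [Set.mem_compl_iff] at hzB
      have hzB' := hzB
      simp only [Set.mem_union, Set.mem_singleton_iff, Set.mem_iUnion, Set.mem_setOf_eq,
        not_or, not_exists] at hzB'
      obtain ⟨hz1, hz2, hroots⟩ := hzB'
      have ha : z - z₁ ≠ 0 := sub_ne_zero.mpr hz1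
      have hb : z - z₂ ≠ 0 := sub_ne_zero.mpr hz2
      have key0 := entry z hzB 0
      have key1 := entry z hzB 1
      have key2 := entry z hzB 2
      rw [rowA, hW z] at key0
      rw [rowB, hW z] at key1
      rw [rowC, hW z] at key2
      simp only [Matrix.of_apply] at key0 key1 key2
      have key0' : ((Polynomial.derivative (p 0 j)).eval z * (q 0 j).eval z
          - (p 0 j).eval z * (Polynomial.derivative (q 0 j)).eval z) / ((q 0 j).eval z)^2
          = 1/(z - z₁) * ((p 1 j).eval z / (q 1 j).eval z)
            + (m₂:ℂ)/(z - z₂) * ((p 2 j).eval z / (q 2 j).eval z) := by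
        rw [key0] <;> ring
      have key1' : ((Polynomial.derivative (p 1 j)).eval z * (q 1 j).eval z
          - (p 1 j).eval z * (Polynomial.derivative (q 1 j)).eval z) / ((q 1 j).eval z)^2
          = 1/(z - z₁) * ((p 0 j).eval z / (q 0 j).eval z)
            + (m₂:ℂ)/(z - z₂) * ((p 1 j).eval z / (q 1 j).eval z) := by
        rw [key1] <;> ring
      have key2' : ((Polynomial.derivative (p 2 j)).eval z * (q 2 j).eval z
          - (p 2 j).eval z * (Polynomial.derivative (q 2 j)).eval z) / ((q 2 j).eval z)^2
          = 1/(z - z₁) * ((p 2 j).eval z / (q 2 j).eval z)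
            + (m₂:ℂ)/(z - z₂) * ((p 0 j).eval z / (q 0 j).eval z) := by
        rw [key2] <;> ring
      have K0 := clearA (z - z₁) (z - z₂) (m₂:ℂ) _ _ _ _ _ _ _ _
        ha hb (hroots 0 j) (hroots 1 j) (hroots 2 j) key0'
      have K1 := clearB (z - z₁) (z - z₂) (m₂:ℂ) _ _ _ _ _ _
        ha hb (hroots 1 j) (hroots 0 j) key1'
      have K2 := clearC (z - z₁) (z - z₂) (m₂:ℂ) _ _ _ _ _ _
        ha hb (hroots 2 j) (hroots 0 j) key2'
      constructor
      · simp only [hN1, hN2, hQdef, Polynomial.derivative_mul, Polynomial.derivative_sub,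
          Polynomial.derivative_X, Polynomial.derivative_C, Polynomial.eval_mul,
          Polynomial.eval_sub, Polynomial.eval_add, Polynomial.eval_neg, Polynomial.eval_X,
          Polynomial.eval_C, Polynomial.eval_one, Polynomial.eval_zero, mul_one, one_mul,
          mul_zero, zero_mul, add_zero, zero_add, sub_zero]
        linear_combination
          ((z-z₁)^2*(z-z₂)^2*((q 1 j).eval z)*((q 2 j).eval z)) * K0
          - ((z-z₁)^2*(z-z₂)^2*((q 0 j).eval z)*((q 2 j).eval z)^2) * K1
      · simp only [hN1, hN2, hQdef, Polynomial.derivative_mul, Polynomial.derivative_sub,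
          Polynomial.derivative_X, Polynomial.derivative_C, Polynomial.eval_mul,
          Polynomial.eval_sub, Polynomial.eval_add, Polynomial.eval_neg, Polynomial.eval_X,
          Polynomial.eval_C, Polynomial.eval_one, Polynomial.eval_zero, mul_one, one_mul,
          mul_zero, zero_mul, add_zero, zero_add, sub_zero]
        linear_combination
          ((z-z₁)^2*(z-z₂)^2*((q 0 j).eval z)*((q 1 j).eval z)^2) * K2
          - ((z-z₁)^2*(z-z₂)^2*((q 0 j).eval z)*((q 2 j).eval z)^2) * K1
    have hE1 : (X - C z₁) * (X - C z₂)
        * (Polynomial.derivative N1 * Q - N1 * Polynomial.derivative Q)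
        = (-((X - C z₂) * N1) + C (m₂:ℂ) * ((X - C z₁) * N2)) * Q := by
      apply Polynomial.eq_of_infinite_eval_eq
      apply Set.Infinite.mono _ hInf
      intro z hzc
      exact (both z hzc).1
    have hE2 : (X - C z₁) * (X - C z₂)
        * (Polynomial.derivative N2 * Q - N2 * Polynomial.derivative Q)
        = ((C (m₂:ℂ) * (X - C z₁) - (X - C z₂)) * N1 + (X - C z₂) * N2) * Q := by
      apply Polynomial.eq_of_infinite_eval_eq
      apply Set.Infinite.mono _ hInf
      intro z hzc
      exact (both z hzc).2
    obtain ⟨h1, -⟩ := core m₂ hm0 hm1 z₁ z₂ N1 N2 Q hQne hE1 hE2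
    rw [hN1] at h1
    rcases mul_eq_zero.mp h1 with h | h
    · exact h
    · exact absurd h (mul_ne_zero (hq 2 j)
        (mul_ne_zero (Polynomial.X_sub_C_ne_zero z₁) (Polynomial.X_sub_C_ne_zero z₂)))
  -- conclude at the point w
  have hrow : W w 0 = W w 1 := by
    funext j
    have h := colzero j
    have := congrArg (Polynomial.eval w) h
    simp only [Polynomial.eval_sub, Polynomial.eval_mul, Polynomial.eval_zero] at this
    rw [hW w]
    show (p 0 j).eval w / (q 0 j).eval w = (p 1 j).eval w / (q 1 j).eval w
    rw [div_eq_div_iff (hwq 0 j) (hwq 1 j)]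
    linear_combination this
  exact hdet (Matrix.det_zero_of_row_eq (by decide : (0 : Fin 3) ≠ 1) hrow)
end

section
/- Let n ≥ 2 and let z = (z_1, …, z_n) ∈ ℂ^n have pairwise distinct coordinates. For 1 ≤ i ≤ n define A_i(z) = Σ_{k≠i} P(i,k)/(z_i − z_k). Then for all i ≠ j, the matrices A_i(z) and A_j(z) commute: A_i(z)·A_j(z) = A_j(z)·A_i(z). (Together with P(i,j) = P(j,i), this implies that the Knizhnik–Zamolodchikov system ∂W/∂z_i = ρ·A_i(z)·W, i = 1, …, n, is consistent.) -/
open Matrix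

/-- A_i(z) = Σ_{k ≠ i} P(i,k)/(z_i - z_k). -/
noncomputable def Amulti (n : ℕ) (z : Fin n → ℂ) (i : Fin n) : Matrix (Fin n) (Fin n) ℂ :=
  ∑ k ∈ Finset.univ.erase i, (z i - z k)⁻¹ • permP n i k

noncomputable def M {n : ℕ} (σ : Equiv.Perm (Fin n)) : Matrix (Fin n) (Fin n) ℂ :=
  Matrix.of fun p q => if p = σ q then 1 else 0

lemma permP_eq {n : ℕ} (a b : Fin n) : permP n a b = M (Equiv.swap a b) := rfl

lemma M_mul {n : ℕ} (σ τ : Equiv.Perm (Fin n)) : M σ * M τ = M (σ * τ) := by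
  ext p q
  rw [Matrix.mul_apply]
  simp only [M, Matrix.of_apply]
  rw [Finset.sum_eq_single (τ q)]
  · simp [Equiv.Perm.mul_apply]
    exact if_congr Iff.rfl rfl rfl
  · intro r _ hr; simp [hr]
  · simp

lemma swap_id_A {n : ℕ} {i j m : Fin n} (hij : i ≠ j) (him : i ≠ m) (hjm : j ≠ m) :
    Equiv.swap i j * Equiv.swap j m = Equiv.swap j m * Equiv.swap i m := by
  ext x
  by_cases hx1 : x = i
  · subst hx1; simp [Equiv.Perm.mul_apply, Equiv.swap_apply_of_ne_of_ne, hij, him, hjm,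
      hij.symm, him.symm, hjm.symm]
  by_cases hx2 : x = j
  · subst hx2; simp [Equiv.Perm.mul_apply, Equiv.swap_apply_of_ne_of_ne, hij, him, hjm,
      hij.symm, him.symm, hjm.symm]
  by_cases hx3 : x = m
  · subst hx3; simp [Equiv.Perm.mul_apply, Equiv.swap_apply_of_ne_of_ne, hij, him, hjm,
      hij.symm, him.symm, hjm.symm]
  · simp [Equiv.Perm.mul_apply, Equiv.swap_apply_of_ne_of_ne, hx1, hx2, hx3]

lemma swap_id_B {n : ℕ} {i j m : Fin n} (hij : i ≠ j) (him : i ≠ m) (hjm : j ≠ m) :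
    Equiv.swap i m * Equiv.swap i j = Equiv.swap j m * Equiv.swap i m := by
  ext x
  by_cases hx1 : x = i
  · subst hx1; simp [Equiv.Perm.mul_apply, Equiv.swap_apply_of_ne_of_ne, hij, him, hjm,
      hij.symm, him.symm, hjm.symm]
  by_cases hx2 : x = j
  · subst hx2; simp [Equiv.Perm.mul_apply, Equiv.swap_apply_of_ne_of_ne, hij, him, hjm,
      hij.symm, him.symm, hjm.symm]
  by_cases hx3 : x = m
  · subst hx3; simp [Equiv.Perm.mul_apply, Equiv.swap_apply_of_ne_of_ne, hij, him, hjm,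
      hij.symm, him.symm, hjm.symm]
  · simp [Equiv.Perm.mul_apply, Equiv.swap_apply_of_ne_of_ne, hx1, hx2, hx3]

lemma swap_id_A' {n : ℕ} {i j m : Fin n} (hij : i ≠ j) (him : i ≠ m) (hjm : j ≠ m) :
    Equiv.swap j m * Equiv.swap i j = Equiv.swap i m * Equiv.swap j m := by
  have := congrArg (·⁻¹) (swap_id_A hij him hjm)
  simpa [_root_.mul_inv_rev] using this

lemma swap_id_B' {n : ℕ} {i j m : Fin n} (hij : i ≠ j) (him : i ≠ m) (hjm : j ≠ m) :
    Equiv.swap i j * Equiv.swap i m = Equiv.swap i m * Equiv.swap j m := by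
  have := congrArg (·⁻¹) (swap_id_B hij him hjm)
  simpa [_root_.mul_inv_rev] using this

lemma swap_disj_comm {n : ℕ} {a b c d : Fin n} (h1 : a ≠ c) (h2 : a ≠ d) (h3 : b ≠ c) (h4 : b ≠ d) :
    Equiv.swap a b * Equiv.swap c d = Equiv.swap c d * Equiv.swap a b := by
  ext x
  by_cases hx1 : x = a
  · subst hx1; simp [Equiv.Perm.mul_apply, Equiv.swap_apply_of_ne_of_ne, h1, h2, h3, h4,
      h1.symm, h2.symm, h3.symm, h4.symm]
  by_cases hx2 : x = b
  · subst hx2; simp [Equiv.Perm.mul_apply, Equiv.swap_apply_of_ne_of_ne, h1, h2, h3, h4,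
      h1.symm, h2.symm, h3.symm, h4.symm]
  by_cases hx3 : x = c
  · subst hx3; simp [Equiv.Perm.mul_apply, Equiv.swap_apply_of_ne_of_ne, h1, h2, h3, h4,
      h1.symm, h2.symm, h3.symm, h4.symm]
  by_cases hx4 : x = d
  · subst hx4; simp [Equiv.Perm.mul_apply, Equiv.swap_apply_of_ne_of_ne, h1, h2, h3, h4,
      h1.symm, h2.symm, h3.symm, h4.symm]
  · simp [Equiv.Perm.mul_apply, Equiv.swap_apply_of_ne_of_ne, hx1, hx2, hx3, hx4]

lemma triple_zero {n : ℕ} (z : Fin n → ℂ) (hz : Function.Injective z)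
    {i j m : Fin n} (hij : i ≠ j) (him : i ≠ m) (hjm : j ≠ m) :
    ((z i - z m)⁻¹ * (z j - z m)⁻¹) •
        (M (Equiv.swap i m * Equiv.swap j m) - M (Equiv.swap j m * Equiv.swap i m))
      + ((z i - z j)⁻¹ * (z j - z m)⁻¹) •
        (M (Equiv.swap i j * Equiv.swap j m) - M (Equiv.swap j m * Equiv.swap i j))
      + ((z i - z m)⁻¹ * (z j - z i)⁻¹) •
        (M (Equiv.swap i m * Equiv.swap j i) - M (Equiv.swap j i * Equiv.swap i m)) = 0 := by
  have e1 : Equiv.swap j i = Equiv.swap i j := Equiv.swap_comm j i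
  rw [e1, swap_id_A hij him hjm, swap_id_A' hij him hjm, swap_id_B hij him hjm,
    ← swap_id_B' hij him hjm, swap_id_B' hij him hjm]
  -- now everything is in terms of X := M (swap i m * swap j m), Y := M (swap j m * swap i m)
  have hzim : z i - z m ≠ 0 := sub_ne_zero.mpr (fun h => him (hz h))
  have hzjm : z j - z m ≠ 0 := sub_ne_zero.mpr (fun h => hjm (hz h))
  have hzij : z i - z j ≠ 0 := sub_ne_zero.mpr (fun h => hij (hz h))
  have hzji : z j - z i ≠ 0 := sub_ne_zero.mpr (fun h => hij.symm (hz h))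
  have hc : (z i - z m)⁻¹ * (z j - z m)⁻¹
      = (z i - z j)⁻¹ * (z j - z m)⁻¹ + (z i - z m)⁻¹ * (z j - z i)⁻¹ := by
    field_simp
    ring
  rw [hc]
  module

/-- For pairwise distinct coordinates z and i ≠ j, the matrices A_i(z) and A_j(z)
commute (consistency of the KZ system). -/
theorem KZ_consistency (n : ℕ) (hn : 2 ≤ n) (z : Fin n → ℂ)
    (hz : Function.Injective z) (i j : Fin n) (hij : i ≠ j) :
    Amulti n z i * Amulti n z j = Amulti n z j * Amulti n z i := by
  set F : Fin n × Fin n → Matrix (Fin n) (Fin n) ℂ := fun p =>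
    ((z i - z p.1)⁻¹ * (z j - z p.2)⁻¹) •
      (M (Equiv.swap i p.1 * Equiv.swap j p.2) - M (Equiv.swap j p.2 * Equiv.swap i p.1))
    with hF
  have expand : ∀ a b : Fin n, Amulti n z a * Amulti n z b =
      ∑ k ∈ Finset.univ.erase a, ∑ l ∈ Finset.univ.erase b,
        ((z a - z k)⁻¹ * (z b - z l)⁻¹) • M (Equiv.swap a k * Equiv.swap b l) := by
    intro a b
    unfold Amulti
    rw [Finset.sum_mul_sum]
    refine Finset.sum_congr rfl fun k _ => Finset.sum_congr rfl fun l _ => ?_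
    rw [permP_eq, permP_eq, smul_mul_smul_comm, M_mul]
  rw [← sub_eq_zero, expand i j, expand j i]
  rw [Finset.sum_comm (s := Finset.univ.erase j)]
  rw [← Finset.sum_sub_distrib]
  have step : ∀ k, (∑ l ∈ Finset.univ.erase j,
        ((z i - z k)⁻¹ * (z j - z l)⁻¹) • M (Equiv.swap i k * Equiv.swap j l))
      - (∑ l ∈ Finset.univ.erase j,
        ((z j - z l)⁻¹ * (z i - z k)⁻¹) • M (Equiv.swap j l * Equiv.swap i k))
      = ∑ l ∈ Finset.univ.erase j, F (k, l) := by
    intro k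
    rw [← Finset.sum_sub_distrib]
    refine Finset.sum_congr rfl fun l _ => ?_
    rw [hF]
    simp only [smul_sub]
    rw [mul_comm ((z j - z l)⁻¹)]
  simp only [step]
  rw [← Finset.sum_product']
  -- Now: ∑ p ∈ (univ.erase i) ×ˢ (univ.erase j), F p = 0
  set T : Finset (Fin n) := (Finset.univ.erase i).erase j with hT
  set S' : Finset (Fin n × Fin n) :=
    (T.image (fun m => (m, m)) ∪ T.image (fun m => ((j : Fin n), m)))
      ∪ T.image (fun m => (m, (i : Fin n))) with hS'
  have hmemT : ∀ m : Fin n, m ∈ T ↔ m ≠ j ∧ m ≠ i := by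
    intro m; simp [hT]
  rw [← Finset.sum_subset (s₁ := S')]
  · -- ∑ p ∈ S', F p = 0
    have hd1 : Disjoint (T.image (fun m => ((m : Fin n), m)))
        (T.image (fun m => ((j : Fin n), m))) := by
      rw [Finset.disjoint_left]
      rintro ⟨a, b⟩ h1 h2
      simp only [Finset.mem_image, Prod.mk.injEq] at h1 h2
      obtain ⟨m, hm, h1a, h1b⟩ := h1
      obtain ⟨m', hm', h2a, h2b⟩ := h2
      exact ((hmemT m).1 hm).1 (h1a.trans h2a.symm)
    have hd2 : Disjoint (T.image (fun m => ((m : Fin n), m)) ∪ T.image (fun m => ((j : Fin n), m)))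
        (T.image (fun m => (m, (i : Fin n)))) := by
      rw [Finset.disjoint_left]
      rintro ⟨a, b⟩ h1 h2
      simp only [Finset.mem_union, Finset.mem_image, Prod.mk.injEq] at h1 h2
      obtain ⟨m', hm', h2a, h2b⟩ := h2
      rcases h1 with ⟨m, hm, h1a, h1b⟩ | ⟨m, hm, h1a, h1b⟩
      · exact ((hmemT m).1 hm).2 (h1b.trans h2b.symm)
      · exact ((hmemT m').1 hm').1 (h2a.trans h1a.symm)
    rw [hS', Finset.sum_union hd2, Finset.sum_union hd1]
    rw [Finset.sum_image (by intro a _ b _ h; exact (Prod.mk.injEq _ _ _ _ ▸ h).1),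
        Finset.sum_image (by intro a _ b _ h; exact (Prod.mk.injEq _ _ _ _ ▸ h).2),
        Finset.sum_image (by intro a _ b _ h; exact (Prod.mk.injEq _ _ _ _ ▸ h).1)]
    rw [← Finset.sum_add_distrib, ← Finset.sum_add_distrib]
    refine Finset.sum_eq_zero fun m hm => ?_
    obtain ⟨hmj, hmi⟩ := (hmemT m).1 hm
    have := triple_zero z hz hij (Ne.symm hmi) (Ne.symm hmj)
    simpa [hF] using this
  · -- S' ⊆ product set
    intro p hp
    simp only [hS', Finset.mem_union, Finset.mem_image] at hp
    rw [Finset.mem_product]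
    rcases hp with (⟨m, hm, rfl⟩ | ⟨m, hm, rfl⟩) | ⟨m, hm, rfl⟩ <;>
      obtain ⟨hmj, hmi⟩ := (hmemT m).1 hm <;>
      simp [Finset.mem_erase, hmj, hmi, hij, Ne.symm hij]
  · -- F vanishes off S'
    rintro ⟨k, l⟩ hp hp'
    rw [Finset.mem_product, Finset.mem_erase, Finset.mem_erase] at hp
    obtain ⟨⟨hki, -⟩, hlj, -⟩ := hp
    by_cases hkj : k = j
    · by_cases hli : l = i
      · simp only [hF, hkj, hli]
        rw [Equiv.swap_comm i j, sub_self, smul_zero]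
      · exfalso
        apply hp'
        simp only [hS', Finset.mem_union, Finset.mem_image]
        subst hkj
        exact Or.inl (Or.inr ⟨l, (hmemT l).2 ⟨hlj, hli⟩, rfl⟩)
    · by_cases hli : l = i
      · exfalso
        apply hp'
        simp only [hS', Finset.mem_union, Finset.mem_image]
        subst hli
        exact Or.inr ⟨k, (hmemT k).2 ⟨hkj, hki⟩, rfl⟩
      · by_cases hkl : k = l
        · exfalso
          apply hp'
          simp only [hS', Finset.mem_union, Finset.mem_image]
          subst hkl
          exact Or.inl (Or.inl ⟨k, (hmemT k).2 ⟨hlj, hki⟩, rfl⟩)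
        · have : Equiv.swap i k * Equiv.swap j l = Equiv.swap j l * Equiv.swap i k :=
            swap_disj_comm hij (fun h => hli h.symm) hkj hkl
          simp only [hF]
          rw [this, sub_self, smul_zero]
end
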